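/- Let f₁, f₂, g₁, g₂ ∈ L^∞. Then S_{f₁,g₁}S_{f₂,g₂} = S_{f₂,g₂}S_{f₁,g₁} if and only if one of the following holds: (1) f₁ = g₁ and f₂ = g₂; (2) f₁, conj(g₁), f₂, conj(g₂) ∈ H^∞; (3) there exist constants c₁, c₂, c₃ with |c₁| + |c₂| ≠ 0 such that c₁f₁ − c₂f₂ = c₃ and c₁g₁ − c₂g₂ = c₃ (equivalently c₁S_{f₁,g₁} = c₂S_{f₂,g₂} + c₃·I on L²). -/

import Mathlib

noncomputable section

open MeasureTheory Complex ComplexConjugate InnerProductSpace ContinuousLinearMap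

namespace GSIO

instance : Fact (0 < 2 * Real.pi) := ⟨by positivity⟩

/-- The circle, modeled as `ℝ / 2πℤ`. -/
abbrev Circ : Type := AddCircle (2 * Real.pi)

/-- Normalized Haar (arc-length) measure on the circle. -/
abbrev μC : Measure Circ := AddCircle.haarAddCircle

/-- `L²` of the circle. -/
abbrev L2 : Type := Lp ℂ 2 μC

/-- `L^∞` of the circle. -/
abbrev Linf : Type := Lp ℂ ⊤ μC

/-- The Hardy space `H²`: those `L²` functions whose negative Fourier coefficients vanish. -/
def Hardy : Submodule ℂ L2 where
  carrier := {f : L2 | ∀ n : ℤ, n < 0 → fourierCoeff (f : Circ → ℂ) n = 0}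
  zero_mem' := by
    intro n hn
    rw [← fourierBasis_repr]
    simp
  add_mem' := by
    intro a b ha hb n hn
    have ha' := ha n hn
    have hb' := hb n hn
    rw [← fourierBasis_repr] at ha' hb' ⊢
    rw [map_add, lp.coeFn_add, Pi.add_apply, ha', hb', add_zero]
  smul_mem' := by
    intro c a ha n hn
    have ha' := ha n hn
    rw [← fourierBasis_repr] at ha' ⊢
    rw [_root_.map_smul, lp.coeFn_smul, Pi.smul_apply, ha', smul_zero]

theorem isClosed_Hardy : IsClosed (Hardy : Set L2) := by
  have h : (Hardy : Set L2) =
      ⋂ n : {m : ℤ // m < 0}, (fun f : L2 =>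
        (innerSL ℂ (fourierBasis (T := 2 * Real.pi) n.1)) f) ⁻¹' {0} := by
    ext f
    simp only [Set.mem_iInter, Set.mem_preimage, Set.mem_singleton_iff, SetLike.mem_coe]
    constructor
    · intro hf n
      have h1 := hf n.1 n.2
      rw [← fourierBasis_repr, fourierBasis.repr_apply_apply] at h1
      simpa using h1
    · intro hf n hn
      have h1 := hf ⟨n, hn⟩
      rw [← fourierBasis_repr, fourierBasis.repr_apply_apply]
      simpa using h1
  rw [h]
  exact isClosed_iInter fun n =>
    isClosed_singleton.preimage (innerSL ℂ _).continuous

instance : CompleteSpace Hardy := isClosed_Hardy.completeSpace_coe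

/-- The Riesz projection `P₊`, i.e. the orthogonal projection of `L²` onto `H²`. -/
def Pp : L2 →L[ℂ] L2 := Hardy.subtypeL.comp (Hardy.orthogonalProjectionOnto)

/-- `P₋ = I − P₊`. -/
def Pm : L2 →L[ℂ] L2 := ContinuousLinearMap.id ℂ L2 - Pp

/-- The pointwise product of an `L^∞` function with an `L²` function, as an `L²` function. -/
def mulFun (φ : Linf) (x : L2) : L2 :=
  ((Lp.memLp x).smul (r := 2) (Lp.memLp φ)).toLp ((φ : Circ → ℂ) • (x : Circ → ℂ))

theorem mulFun_add (φ : Linf) (x y : L2) : mulFun φ (x + y) = mulFun φ x + mulFun φ y := by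
  rw [mulFun, mulFun, mulFun, ← MemLp.toLp_add]
  apply MemLp.toLp_congr
  filter_upwards [Lp.coeFn_add x y] with t ht
  have ht' : ((x + y : L2) : Circ → ℂ) t = (x : Circ → ℂ) t + (y : Circ → ℂ) t := by
    simpa using ht
  simp only [Pi.mul_apply, Pi.smul_apply, Pi.add_apply, smul_eq_mul, ht']
  ring

theorem mulFun_smul (c : ℂ) (φ : Linf) (x : L2) : mulFun φ (c • x) = c • mulFun φ x := by
  rw [mulFun, mulFun, ← MemLp.toLp_const_smul]
  apply MemLp.toLp_congr
  filter_upwards [Lp.coeFn_smul c x] with t ht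
  have ht' : ((c • x : L2) : Circ → ℂ) t = c * (x : Circ → ℂ) t := by
    simpa using ht
  simp only [Pi.mul_apply, Pi.smul_apply, smul_eq_mul, ht']
  ring

theorem norm_mulFun_le (φ : Linf) (x : L2) : ‖mulFun φ x‖ ≤ ‖φ‖ * ‖x‖ := by
  rw [mulFun, Lp.norm_toLp]
  have h := eLpNorm_smul_le_eLpNorm_top_mul_eLpNorm (μ := μC) 2
    (Lp.aestronglyMeasurable x) (φ : Circ → ℂ)
  refine le_trans (ENNReal.toReal_mono ?_ h) ?_
  · exact ENNReal.mul_ne_top (Lp.eLpNorm_ne_top φ) (Lp.eLpNorm_ne_top x)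
  · rw [ENNReal.toReal_mul, Lp.norm_def, Lp.norm_def]

/-- The multiplication operator `M_φ` on `L²`, for `φ ∈ L^∞`. -/
def mul (φ : Linf) : L2 →L[ℂ] L2 :=
  LinearMap.mkContinuous
    { toFun := mulFun φ
      map_add' := mulFun_add φ
      map_smul' := fun c x => mulFun_smul c φ x }
    ‖φ‖ (fun x => norm_mulFun_le φ x)

/-- Pointwise product in `L^∞`. -/
def mulInf (φ ψ : Linf) : Linf :=
  ((Lp.memLp ψ).smul (r := ⊤) (Lp.memLp φ)).toLp ((φ : Circ → ℂ) • (ψ : Circ → ℂ))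

/-- Complex conjugation on `L^∞`. -/
def conjInf (φ : Linf) : Linf :=
  (show MemLp (fun t => star ((φ : Circ → ℂ) t)) ⊤ μC from
    ⟨continuous_star.comp_aestronglyMeasurable (Lp.aestronglyMeasurable φ), by
      rw [eLpNorm_congr_norm_ae (g := (φ : Circ → ℂ))
        (Filter.Eventually.of_forall fun t => norm_star _)]
      exact Lp.eLpNorm_lt_top φ⟩).toLp _

/-- Complex conjugation on `L²`. -/
def conjL2 (x : L2) : L2 :=
  (show MemLp (fun t => star ((x : Circ → ℂ) t)) 2 μC from
    ⟨continuous_star.comp_aestronglyMeasurable (Lp.aestronglyMeasurable x), by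
      rw [eLpNorm_congr_norm_ae (g := (x : Circ → ℂ))
        (Filter.Eventually.of_forall fun t => norm_star _)]
      exact Lp.eLpNorm_lt_top x⟩).toLp _

/-- The inclusion `L^∞ ⊆ L²` (the measure is finite). -/
def toL2 (φ : Linf) : L2 := ((Lp.memLp φ).mono_exponent le_top).toLp φ

/-- The constant function `c` as an element of `L^∞`. -/
def constInf (c : ℂ) : Linf := (memLp_const c).toLp (fun _ => c)

/-- An `L^∞` function is constant (a.e.). -/
def IsConst (φ : Linf) : Prop := ∃ c : ℂ, φ = constInf c

/-- `φ ∈ H^∞ = L^∞ ∩ H²`: the negative Fourier coefficients of `φ` vanish. -/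
def MemHinf (φ : Linf) : Prop := ∀ n : ℤ, n < 0 → fourierCoeff (φ : Circ → ℂ) n = 0

/-- The coordinate function `z` as an element of `L^∞`. -/
def zInf : Linf := fourierLp (T := 2 * Real.pi) ⊤ 1

/-- The function `z̄` as an element of `L^∞`. -/
def zbarInf : Linf := fourierLp (T := 2 * Real.pi) ⊤ (-1)

/-- The antiunitary operator `V : h ↦ z̄ ⬝ conj h` on `L²`. -/
def Vmap (x : L2) : L2 := mul zbarInf (conjL2 x)

/-- `φ₋ = P₋ φ` for `φ ∈ L^∞`, viewed inside `L²`. -/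
def mI (φ : Linf) : L2 := Pm (toL2 φ)

/-- The rank-one operator `p ⊗ q : x ↦ ⟪x, q⟫ · p` (the inner product being conjugate-linear
in `q`). -/
def rankOne {E : Type*} [NormedAddCommGroup E] [InnerProductSpace ℂ E] (p q : E) : E →L[ℂ] E :=
  (innerSL ℂ q).smulRight p

/-- The Hilbert space direct sum `L² ⊕ L²`. -/
abbrev L2sq : Type := WithLp 2 (L2 × L2)

/-- A pair of `L²` functions, viewed as a vector in `L² ⊕ L²`. -/
def pair (x y : L2) : L2sq := (WithLp.equiv 2 (L2 × L2)).symm (x, y)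

/-- Notation for the pointwise product in `L^∞`. -/
scoped infixl:70 " ⊙ " => GSIO.mulInf

/-- The Toeplitz operator `T_φ = P₊ M_φ P₊` (viewed as acting on the corner `H²` of `L²`). -/
def Toeplitz (φ : Linf) : L2 →L[ℂ] L2 := Pp ∘L mul φ ∘L Pp

/-- The Hankel operator `H_φ = P₋ M_φ P₊ : H² → (H²)^⊥` (as a corner operator on `L²`). -/
def Hankel (φ : Linf) : L2 →L[ℂ] L2 := Pm ∘L mul φ ∘L Pp

/-- The dual Toeplitz operator `T̃_φ = P₋ M_φ P₋` on `(H²)^⊥` (as a corner operator on `L²`). -/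
def dualToeplitz (φ : Linf) : L2 →L[ℂ] L2 := Pm ∘L mul φ ∘L Pm

/-- The generalized Cauchy singular integral operator with symbol `[[f, u], [g, v]]`:
`R x = P₊ f P₊ x + P₋ g P₊ x + P₊ u P₋ x + P₋ v P₋ x`. -/
def Rop (f u g v : Linf) : L2 →L[ℂ] L2 :=
  Pp ∘L mul f ∘L Pp + Pm ∘L mul g ∘L Pp + Pp ∘L mul u ∘L Pm + Pm ∘L mul v ∘L Pm

/-- The singular integral operator `S_{f,g} = M_f P₊ + M_g P₋` on `L²`. -/
def Sop (f g : Linf) : L2 →L[ℂ] L2 := mul f ∘L Pp + mul g ∘L Pm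



/-- Negation `t ↦ -t` preserves the Haar measure of the circle. -/
theorem mp_neg : MeasurePreserving (fun t : Circ => -t) μC μC :=
  Measure.measurePreserving_neg μC

/-- Composition with `t ↦ -t` on `L²`. -/
def reflL2 : L2 →L[ℂ] L2 :=
  (Lp.compMeasurePreservingₗᵢ ℂ (fun t : Circ => -t) mp_neg).toContinuousLinearMap

/-- Composition with `t ↦ -t` on `L^∞`: for `φ ∈ L^∞`, `φ̃(z) = φ(z̄)`. -/
def reflInf (φ : Linf) : Linf := Lp.compMeasurePreserving (fun t : Circ => -t) mp_neg φ

/-- `φ* (z) = conj (φ(z̄))`. -/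
def starInf (φ : Linf) : Linf := conjInf (reflInf φ)

/-- The flip operator `J : (Jh)(z) = z̄ · h(z̄)` on `L²`. -/
def Jop : L2 →L[ℂ] L2 := mul zbarInf ∘L reflL2

/-- The Hankel operator `𝕳_φ = P₊ M_φ J` on `H²` (as a corner operator on `L²`). -/
def HankelPlus (φ : Linf) : L2 →L[ℂ] L2 := Pp ∘L mul φ ∘L Jop ∘L Pp

/-- The adjoint `H*_φ` of the Hankel operator `H_φ`. -/
def HankelAdj (φ : Linf) : L2 →L[ℂ] L2 := ContinuousLinearMap.adjoint (Hankel φ)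

/-- `θ ∈ L^∞` is an inner function: `θ ∈ H^∞` and `|θ| = 1` a.e. -/
def IsInner (θ : Linf) : Prop := MemHinf θ ∧ ∀ᵐ t ∂μC, ‖(θ : Circ → ℂ) t‖ = 1

/-- The orthogonal projection of `L²` onto `K_θ^⊥ = θH² ⊕ z̄·conj(H²)`, namely
`P₋ + M_θ P₊ M_{conj θ}`. -/
def Qproj (θ : Linf) : L2 →L[ℂ] L2 := Pm + mul θ ∘L Pp ∘L mul (conjInf θ)

/-! ### Basic coefficient infrastructure -/

/-- Fourier coefficient of an `L²` element. -/
def co (x : L2) (n : ℤ) : ℂ := fourierCoeff (x : Circ → ℂ) n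

/-- Fourier coefficient of an `L^∞` element. -/
def ci (φ : Linf) (n : ℤ) : ℂ := fourierCoeff (φ : Circ → ℂ) n

lemma co_eq_repr (x : L2) (n : ℤ) : co x n = fourierBasis.repr x n :=
  (fourierBasis_repr x n).symm

lemma ext_co {x y : L2} (h : ∀ n, co x n = co y n) : x = y := by
  apply fourierBasis.repr.injective
  apply lp.ext
  funext n
  have := h n
  rwa [co_eq_repr, co_eq_repr] at this

lemma co_sub (x y : L2) (n : ℤ) : co (x - y) n = co x n - co y n := by
  rw [co_eq_repr, co_eq_repr, co_eq_repr, map_sub]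
  rfl

lemma co_add (x y : L2) (n : ℤ) : co (x + y) n = co x n + co y n := by
  rw [co_eq_repr, co_eq_repr, co_eq_repr, map_add]
  rfl

lemma co_zero (n : ℤ) : co (0 : L2) n = 0 := by
  rw [co_eq_repr, map_zero]
  rfl

lemma co_smul (c : ℂ) (x : L2) (n : ℤ) : co (c • x) n = c * co x n := by
  rw [co_eq_repr, co_eq_repr, _root_.map_smul]
  rfl

lemma parseval (x y : L2) : (inner ℂ x y : ℂ) = ∑' k, conj (co x k) * co y k := by
  rw [← HilbertBasis.tsum_inner_mul_inner fourierBasis x y]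
  congr 1
  funext k
  rw [co_eq_repr, co_eq_repr, fourierBasis.repr_apply_apply, fourierBasis.repr_apply_apply,
    ← inner_conj_symm x (fourierBasis k)]

lemma parseval_summable (x y : L2) : Summable fun k => conj (co x k) * co y k := by
  have := HilbertBasis.summable_inner_mul_inner fourierBasis x y
  refine this.congr (fun k => ?_)
  symm
  rw [co_eq_repr, co_eq_repr, fourierBasis.repr_apply_apply, fourierBasis.repr_apply_apply,
    ← inner_conj_symm x (fourierBasis k)]

lemma fourierCoeff_congr {f g : Circ → ℂ} (h : f =ᵐ[μC] g) (n : ℤ) :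
    fourierCoeff f n = fourierCoeff g n := by
  apply integral_congr_ae
  filter_upwards [h] with t ht
  rw [ht]

lemma co_e (n k : ℤ) : co (fourierBasis (T := 2 * Real.pi) n) k = if k = n then 1 else 0 := by
  classical
  rw [co_eq_repr, fourierBasis.repr_self]
  by_cases h : k = n
  · subst h; rw [lp.single_apply_self]; simp
  · rw [lp.single_apply_ne _ _ _ h]; simp [h]
/-! ### Coercion lemmas -/

lemma mul_coeFn (φ : Linf) (x : L2) :
    (mul φ x : Circ → ℂ) =ᵐ[μC] fun t => (φ : Circ → ℂ) t * (x : Circ → ℂ) t := by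
  have h : mul φ x = mulFun φ x := rfl
  rw [h, mulFun]
  filter_upwards [MemLp.coeFn_toLp ((Lp.memLp x).smul (r := 2) (Lp.memLp φ))] with t ht
  rw [ht]
  simp [smul_eq_mul]

lemma toL2_coeFn (φ : Linf) : (toL2 φ : Circ → ℂ) =ᵐ[μC] (φ : Circ → ℂ) :=
  MemLp.coeFn_toLp _

lemma conjInf_coeFn (φ : Linf) :
    (conjInf φ : Circ → ℂ) =ᵐ[μC] fun t => conj ((φ : Circ → ℂ) t) :=
  MemLp.coeFn_toLp _

lemma constInf_coeFn (c : ℂ) : (constInf c : Circ → ℂ) =ᵐ[μC] fun _ => c :=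
  MemLp.coeFn_toLp _

lemma e_coeFn (n : ℤ) :
    (fourierBasis (T := 2 * Real.pi) n : Circ → ℂ) =ᵐ[μC] fourier n := by
  rw [coe_fourierBasis]
  exact coeFn_fourierLp 2 n

lemma ci_eq_co (φ : Linf) (n : ℤ) : ci φ n = co (toL2 φ) n :=
  (fourierCoeff_congr (toL2_coeFn φ) n).symm

lemma linf_ext {φ ψ : Linf} (h : ∀ n, ci φ n = ci ψ n) : φ = ψ := by
  have h2 : toL2 φ = toL2 ψ := ext_co (fun n => by rw [← ci_eq_co, ← ci_eq_co]; exact h n)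
  apply Lp.ext (p := (⊤ : ENNReal)) (μ := μC)
  have h3 : (toL2 φ : Circ → ℂ) =ᵐ[μC] (toL2 ψ : Circ → ℂ) := by rw [h2]
  exact ((toL2_coeFn φ).symm.trans h3).trans (toL2_coeFn ψ)

/-! ### Integrability and linearity of `ci` -/

lemma integrable_coe (φ : Linf) : Integrable (φ : Circ → ℂ) μC :=
  memLp_one_iff_integrable.mp ((Lp.memLp φ).mono_exponent le_top)

lemma norm_fourier_apply (n : ℤ) (t : Circ) : ‖fourier n t‖ = 1 := by
  simp [fourier_apply, Circle.norm_coe]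

lemma integrable_fourier_mul (φ : Linf) (m : ℤ) :
    Integrable (fun t => fourier m t * (φ : Circ → ℂ) t) μC := by
  refine Integrable.bdd_mul (integrable_coe φ)
    ((map_continuous (fourier m)).aestronglyMeasurable) (c := 1) (Filter.Eventually.of_forall fun t => ?_)
  rw [norm_fourier_apply]

lemma ci_sub_smul (c₁ c₂ : ℂ) (φ ψ : Linf) (n : ℤ) :
    ci (c₁ • φ - c₂ • ψ) n = c₁ * ci φ n - c₂ * ci ψ n := by
  have h : ((c₁ • φ - c₂ • ψ : Linf) : Circ → ℂ) =ᵐ[μC]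
      fun t => c₁ * (φ : Circ → ℂ) t - c₂ * (ψ : Circ → ℂ) t := by
    filter_upwards [Lp.coeFn_sub (c₁ • φ) (c₂ • ψ), Lp.coeFn_smul c₁ φ, Lp.coeFn_smul c₂ ψ]
      with t h1 h2 h3
    rw [h1, Pi.sub_apply, h2, h3]
    simp [smul_eq_mul]
  rw [ci, fourierCoeff_congr h n, fourierCoeff]
  have heq : ∀ t : Circ, fourier (-n) t • (c₁ * (φ : Circ → ℂ) t - c₂ * (ψ : Circ → ℂ) t)
      = c₁ * (fourier (-n) t * (φ : Circ → ℂ) t) - c₂ * (fourier (-n) t * (ψ : Circ → ℂ) t) := by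
    intro t; simp [smul_eq_mul]; ring
  simp_rw [heq]
  rw [integral_sub ((integrable_fourier_mul φ (-n)).const_mul c₁)
    ((integrable_fourier_mul ψ (-n)).const_mul c₂), integral_const_mul, integral_const_mul]
  rfl

lemma ci_const (c : ℂ) (p : ℤ) : ci (constInf c) p = if p = 0 then c else 0 := by
  have h1 : (constInf c : Circ → ℂ) =ᵐ[μC] ((c • fourierBasis (T := 2 * Real.pi) 0 : L2) : Circ → ℂ) := by
    filter_upwards [constInf_coeFn c, Lp.coeFn_smul c (fourierBasis (T := 2 * Real.pi) 0 : L2),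
      e_coeFn 0] with t h1 h2 h3
    rw [h1, h2, Pi.smul_apply, h3]
    simp [fourier_zero, smul_eq_mul]
  rw [ci, fourierCoeff_congr h1 p, ← co, co_smul, co_e]
  simp
/-! ### Coefficients of the Riesz projection -/

lemma co_Pp (x : L2) (n : ℤ) : co (Pp x) n = if 0 ≤ n then co x n else 0 := by
  classical
  set a : ℤ → ℂ := fun k => if 0 ≤ k then fourierBasis.repr x k else 0 with ha
  have hmem : Memℓp a 2 := by
    apply memℓp_gen
    have hs : Summable fun k => ‖fourierBasis.repr x k‖ ^ ENNReal.toReal 2 :=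
      (memℓp_gen_iff (by norm_num)).mp (lp.memℓp (fourierBasis.repr x))
    refine Summable.of_nonneg_of_le (fun k => ?_) (fun k => ?_) hs
    · positivity
    · rw [ha]
      by_cases h : 0 ≤ k
      · simp only [if_pos h]; exact le_refl _
      · simp only [if_neg h, norm_zero]
        rw [Real.zero_rpow (by norm_num : ENNReal.toReal 2 ≠ 0)]
        positivity
  set y : L2 := fourierBasis.repr.symm ⟨a, hmem⟩ with hy
  have hrepr : ∀ k, fourierBasis.repr y k = a k := by
    intro k
    rw [hy, LinearIsometryEquiv.apply_symm_apply]
  have hco : ∀ k, co y k = a k := fun k => by rw [co_eq_repr, hrepr]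
  have hyH : y ∈ Hardy := by
    intro k hk
    have : co y k = 0 := by rw [hco, ha]; simp [not_le.mpr hk]
    exact this
  have horth : ∀ w ∈ Hardy, (inner ℂ (x - y) w : ℂ) = 0 := by
    intro w hw
    rw [parseval]
    convert tsum_zero with k
    rcases lt_or_ge k 0 with hk | hk
    · have : co w k = 0 := hw k hk
      rw [this, mul_zero]
    · have : co (x - y) k = 0 := by
        rw [co_sub, hco, ha]
        simp [hk, co_eq_repr]
      rw [this, map_zero, zero_mul]
  have hproj : (Hardy.orthogonalProjectionOnto x : L2) = y := by
    have := Submodule.eq_starProjection_of_mem_of_inner_eq_zero hyH horth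
    exact (Submodule.starProjection_apply Hardy x).symm.trans this
  have hPp : Pp x = y := by
    rw [Pp]
    exact hproj
  rw [hPp, hco, ha, co_eq_repr]

lemma co_Pm (x : L2) (n : ℤ) : co (Pm x) n = if 0 ≤ n then 0 else co x n := by
  have h : Pm x = x - Pp x := rfl
  rw [h, co_sub, co_Pp]
  by_cases hn : 0 ≤ n <;> simp [hn]
/-! ### Convolution formulas -/

lemma co_mul_e (φ : Linf) (n k : ℤ) :
    co (mul φ (fourierBasis (T := 2 * Real.pi) n)) k = ci φ (k - n) := by
  have h : (mul φ (fourierBasis (T := 2 * Real.pi) n) : Circ → ℂ) =ᵐ[μC]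
      fun t => fourier n t * (φ : Circ → ℂ) t := by
    filter_upwards [mul_coeFn φ (fourierBasis (T := 2 * Real.pi) n), e_coeFn n] with t h1 h2
    rw [h1, h2, mul_comm]
  rw [co, fourierCoeff_congr h, ci, fourierCoeff, fourierCoeff]
  apply integral_congr_ae
  apply Filter.Eventually.of_forall
  intro t
  simp only [smul_eq_mul]
  rw [← mul_assoc, ← fourier_add]
  congr 2
  ring_nf

lemma co_mul_conj_e (φ : Linf) (m k : ℤ) :
    co (mul (conjInf φ) (fourierBasis (T := 2 * Real.pi) m)) k = conj (ci φ (m - k)) := by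
  have h : (mul (conjInf φ) (fourierBasis (T := 2 * Real.pi) m) : Circ → ℂ) =ᵐ[μC]
      fun t => conj ((φ : Circ → ℂ) t) * fourier m t := by
    filter_upwards [mul_coeFn (conjInf φ) (fourierBasis (T := 2 * Real.pi) m),
      conjInf_coeFn φ, e_coeFn m] with t h1 h2 h3
    rw [h1, h2, h3]
  rw [co, fourierCoeff_congr h, fourierCoeff, ci, fourierCoeff, ← integral_conj]
  apply integral_congr_ae
  apply Filter.Eventually.of_forall
  intro t
  simp only [smul_eq_mul, map_mul]
  rw [← fourier_neg]
  rw [show (- -(m - k) : ℤ) = m + -k by ring, fourier_add]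
  ring

lemma conv (φ : Linf) (x : L2) (m : ℤ) :
    co (mul φ x) m = ∑' k, ci φ (m - k) * co x k := by
  have h1 : co (mul φ x) m
      = (inner ℂ (mul (conjInf φ) (fourierBasis (T := 2 * Real.pi) m)) x : ℂ) := by
    rw [MeasureTheory.L2.inner_def, co, fourierCoeff]
    apply integral_congr_ae
    filter_upwards [mul_coeFn φ x, mul_coeFn (conjInf φ) (fourierBasis (T := 2 * Real.pi) m),
      conjInf_coeFn φ, e_coeFn m] with t h2 h3 h4 h5
    rw [h2, RCLike.inner_apply, h3, h4, h5]
    simp only [smul_eq_mul, map_mul, conj_conj]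
    rw [← fourier_neg]
    ring
  rw [h1, parseval]
  congr 1
  funext k
  rw [co_mul_conj_e, conj_conj]

lemma conv_summable (φ : Linf) (x : L2) (m : ℤ) :
    Summable fun k => ci φ (m - k) * co x k := by
  have := parseval_summable (mul (conjInf φ) (fourierBasis (T := 2 * Real.pi) m)) x
  convert this using 2 with k
  rw [co_mul_conj_e, conj_conj]
/-! ### Action of `Sop` in coordinates -/

lemma Sop_apply (f g : Linf) (v : L2) : Sop f g v = mul f (Pp v) + mul g (Pm v) := rfl

lemma summable_maskp (f : Linf) (v : L2) (m : ℤ) :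
    Summable fun k => if 0 ≤ k then ci f (m - k) * co v k else 0 := by
  have h := conv_summable f (Pp v) m
  convert h using 2 with k
  rw [co_Pp]
  by_cases hk : 0 ≤ k <;> simp [hk]

lemma summable_maskm (g : Linf) (v : L2) (m : ℤ) :
    Summable fun k => if 0 ≤ k then 0 else ci g (m - k) * co v k := by
  have h := conv_summable g (Pm v) m
  convert h using 2 with k
  rw [co_Pm]
  by_cases hk : 0 ≤ k <;> simp [hk]

lemma co_Sop (f g : Linf) (v : L2) (m : ℤ) :
    co (Sop f g v) m = ∑' k, (if 0 ≤ k then ci f (m - k) else ci g (m - k)) * co v k := by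
  rw [Sop_apply, co_add, conv, conv]
  have h1 : ∀ k, ci f (m - k) * co (Pp v) k = (if 0 ≤ k then ci f (m - k) * co v k else 0) := by
    intro k
    rw [co_Pp]
    by_cases hk : 0 ≤ k <;> simp [hk]
  have h2 : ∀ k, ci g (m - k) * co (Pm v) k = (if 0 ≤ k then 0 else ci g (m - k) * co v k) := by
    intro k
    rw [co_Pm]
    by_cases hk : 0 ≤ k <;> simp [hk]
  simp_rw [h1, h2]
  rw [← Summable.tsum_add (summable_maskp f v m) (summable_maskm g v m)]
  congr 1
  funext k
  by_cases hk : 0 ≤ k <;> simp [hk]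

lemma summable_co_Sop (f g : Linf) (v : L2) (m : ℤ) :
    Summable fun k => (if 0 ≤ k then ci f (m - k) else ci g (m - k)) * co v k := by
  have := (summable_maskp f v m).add (summable_maskm g v m)
  convert this using 2 with k
  by_cases hk : 0 ≤ k <;> simp [hk]

lemma Pp_e_nonneg {n : ℤ} (hn : 0 ≤ n) :
    Pp (fourierBasis (T := 2 * Real.pi) n) = fourierBasis (T := 2 * Real.pi) n := by
  apply ext_co
  intro k
  rw [co_Pp, co_e]
  by_cases hk : k = n
  · subst hk; simp [hn]
  · simp [hk]

lemma Pp_e_neg {n : ℤ} (hn : n < 0) : Pp (fourierBasis (T := 2 * Real.pi) n) = 0 := by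
  apply ext_co
  intro k
  rw [co_Pp, co_e, co_zero]
  by_cases hk : k = n
  · subst hk; simp [not_le.mpr hn]
  · simp [hk]

lemma Sop_e_nonneg (f g : Linf) {n : ℤ} (hn : 0 ≤ n) :
    Sop f g (fourierBasis (T := 2 * Real.pi) n) = mul f (fourierBasis (T := 2 * Real.pi) n) := by
  have hm : Pm (fourierBasis (T := 2 * Real.pi) n) = 0 := by
    have : Pm (fourierBasis (T := 2 * Real.pi) n)
        = fourierBasis (T := 2 * Real.pi) n - Pp (fourierBasis (T := 2 * Real.pi) n) := rfl
    rw [this, Pp_e_nonneg hn, sub_self]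
  rw [Sop_apply, Pp_e_nonneg hn, hm, map_zero, add_zero]

lemma Sop_e_neg (f g : Linf) {n : ℤ} (hn : n < 0) :
    Sop f g (fourierBasis (T := 2 * Real.pi) n) = mul g (fourierBasis (T := 2 * Real.pi) n) := by
  have hm : Pm (fourierBasis (T := 2 * Real.pi) n) = fourierBasis (T := 2 * Real.pi) n := by
    have : Pm (fourierBasis (T := 2 * Real.pi) n)
        = fourierBasis (T := 2 * Real.pi) n - Pp (fourierBasis (T := 2 * Real.pi) n) := rfl
    rw [this, Pp_e_neg hn, sub_zero]
  rw [Sop_apply, Pp_e_neg hn, hm, map_zero, zero_add]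
/-! ### Reduction of commutation to coefficient relations -/

lemma summable_conv2 (φ ψ : Linf) (m n : ℤ) :
    Summable fun k => ci φ (m - k) * ci ψ (k - n) := by
  have h := conv_summable φ (mul ψ (fourierBasis (T := 2 * Real.pi) n)) m
  simp_rw [co_mul_e] at h
  exact h

lemma summable_sigma_conv (f g ψ : Linf) (m n : ℤ) :
    Summable fun k => (if 0 ≤ k then ci f (m - k) else ci g (m - k)) * ci ψ (k - n) := by
  have h := summable_co_Sop f g (mul ψ (fourierBasis (T := 2 * Real.pi) n)) m
  simp_rw [co_mul_e] at h
  exact h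

lemma conv_symm (φ ψ : Linf) (m n : ℤ) :
    ∑' k, ci φ (m - k) * ci ψ (k - n) = ∑' k, ci ψ (m - k) * ci φ (k - n) := by
  rw [← Equiv.tsum_eq (Equiv.subLeft (m + n)) (fun k => ci φ (m - k) * ci ψ (k - n))]
  congr 1
  funext k
  simp only [Equiv.subLeft_apply]
  rw [show m - (m + n - k) = k - n by ring, show m + n - k - n = m - k by ring, mul_comm]

lemma summable_maskA_neg (f g ψ : Linf) (m n : ℤ) :
    Summable fun k => if k < 0 then (ci f (m - k) - ci g (m - k)) * ci ψ (k - n) else 0 := by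
  have h := (summable_conv2 f ψ m n).sub (summable_sigma_conv f g ψ m n)
  refine h.congr (fun k => ?_)
  symm
  by_cases hk : 0 ≤ k
  · simp only [not_lt.mpr hk, if_neg, if_pos hk]
    simp [hk]
  · simp only [if_pos (not_le.mp hk), if_neg hk]
    ring

lemma summable_maskA_pos (f g ψ : Linf) (m n : ℤ) :
    Summable fun k => if 0 ≤ k then (ci f (m - k) - ci g (m - k)) * ci ψ (k - n) else 0 := by
  have h := (summable_sigma_conv f g ψ m n).sub (summable_conv2 g ψ m n)
  refine h.congr (fun k => ?_)
  symm
  by_cases hk : 0 ≤ k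
  · simp only [if_pos hk]
    ring
  · simp only [if_neg hk]
    simp [hk]

lemma sigma_eq_conv_sub_mask (f g ψ : Linf) (m n : ℤ) :
    ∑' k, (if 0 ≤ k then ci f (m - k) else ci g (m - k)) * ci ψ (k - n)
      = (∑' k, ci f (m - k) * ci ψ (k - n))
        - ∑' k, (if k < 0 then (ci f (m - k) - ci g (m - k)) * ci ψ (k - n) else 0) := by
  rw [← Summable.tsum_sub (summable_conv2 f ψ m n) (summable_maskA_neg f g ψ m n)]
  congr 1
  funext k
  by_cases hk : 0 ≤ k
  · simp only [if_pos hk, if_neg (not_lt.mpr hk)]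
    ring
  · simp only [if_neg hk, if_pos (not_le.mp hk)]
    ring

lemma sigma_eq_conv_add_mask (f g ψ : Linf) (m n : ℤ) :
    ∑' k, (if 0 ≤ k then ci f (m - k) else ci g (m - k)) * ci ψ (k - n)
      = (∑' k, ci g (m - k) * ci ψ (k - n))
        + ∑' k, (if 0 ≤ k then (ci f (m - k) - ci g (m - k)) * ci ψ (k - n) else 0) := by
  rw [← Summable.tsum_add (summable_conv2 g ψ m n) (summable_maskA_pos f g ψ m n)]
  congr 1
  funext k
  by_cases hk : 0 ≤ k
  · simp only [if_pos hk]
    ring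
  · simp only [if_neg hk]
    ring

lemma T_iff_D_neg (f₁ g₁ f₂ g₂ : Linf) (m n : ℤ) :
    (∑' k, (if 0 ≤ k then ci f₁ (m - k) else ci g₁ (m - k)) * ci f₂ (k - n)
      = ∑' k, (if 0 ≤ k then ci f₂ (m - k) else ci g₂ (m - k)) * ci f₁ (k - n)) ↔
    (∑' k, (if k < 0 then (ci f₁ (m - k) - ci g₁ (m - k)) * ci f₂ (k - n) else 0)
      = ∑' k, (if k < 0 then (ci f₂ (m - k) - ci g₂ (m - k)) * ci f₁ (k - n) else 0)) := by
  rw [sigma_eq_conv_sub_mask, sigma_eq_conv_sub_mask, conv_symm f₂ f₁ m n]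
  constructor
  · intro h
    exact sub_right_injective h
  · intro h
    rw [h]

lemma T_iff_D_pos (f₁ g₁ f₂ g₂ : Linf) (m n : ℤ) :
    (∑' k, (if 0 ≤ k then ci f₁ (m - k) else ci g₁ (m - k)) * ci g₂ (k - n)
      = ∑' k, (if 0 ≤ k then ci f₂ (m - k) else ci g₂ (m - k)) * ci g₁ (k - n)) ↔
    (∑' k, (if 0 ≤ k then (ci f₁ (m - k) - ci g₁ (m - k)) * ci g₂ (k - n) else 0)
      = ∑' k, (if 0 ≤ k then (ci f₂ (m - k) - ci g₂ (m - k)) * ci g₁ (k - n) else 0)) := by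
  rw [sigma_eq_conv_add_mask, sigma_eq_conv_add_mask, conv_symm g₂ g₁ m n]
  constructor
  · intro h
    exact add_left_cancel h
  · intro h
    rw [h]
/-! ### Isolating individual coefficient relations -/

lemma tsum_single_term (X : ℤ → ℂ) (a : ℤ) : ∑' k, (if k = a then X k else 0) = X a := by
  have h : ∀ k, (if k = a then X k else 0) = (if k = a then X a else 0) := by
    intro k
    by_cases hk : k = a
    · subst hk; simp
    · simp [hk]
  rw [tsum_congr h, tsum_ite_eq]

lemma summable_single_term (X : ℤ → ℂ) (a : ℤ) : Summable fun k => if k = a then X k else 0 := by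
  have h : ∀ k, (if k = a then X k else 0) = (if k = a then X a else 0) := by
    intro k
    by_cases hk : k = a
    · subst hk; simp
    · simp [hk]
  rw [funext h]
  exact (hasSum_ite_eq a (X a)).summable

lemma isolate_neg (X : ℤ → ℂ) (h1 : Summable fun k => if k < -1 then X k else 0) :
    (∑' k, if k < 0 then X k else 0) - (∑' k, if k < -1 then X k else 0) = X (-1) := by
  have hpt : ∀ k : ℤ, (if k < 0 then X k else 0)
      = (if k < -1 then X k else 0) + (if k = -1 then X k else 0) := by
    intro k
    by_cases h2 : k < -1
    · rw [if_pos h2, if_pos (by omega : k < 0), if_neg (by omega : k ≠ -1), add_zero]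
    · by_cases h3 : k = -1
      · subst h3; norm_num
      · rw [if_neg h2, if_neg (by omega : ¬ k < 0), if_neg h3, add_zero]
  rw [tsum_congr hpt, Summable.tsum_add h1 (summable_single_term X (-1)), tsum_single_term]
  ring

lemma isolate_pos (X : ℤ → ℂ) (h1 : Summable fun k => if 1 ≤ k then X k else 0) :
    (∑' k, if 0 ≤ k then X k else 0) - (∑' k, if 1 ≤ k then X k else 0) = X 0 := by
  have hpt : ∀ k : ℤ, (if 0 ≤ k then X k else 0)
      = (if 1 ≤ k then X k else 0) + (if k = 0 then X k else 0) := by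
    intro k
    by_cases h2 : 1 ≤ k
    · rw [if_pos h2, if_pos (by omega : 0 ≤ k), if_neg (by omega : k ≠ 0), add_zero]
    · by_cases h3 : k = 0
      · subst h3; norm_num
      · rw [if_neg h2, if_neg (by omega : ¬ (0:ℤ) ≤ k), if_neg h3, add_zero]
  rw [tsum_congr hpt, Summable.tsum_add h1 (summable_single_term X 0), tsum_single_term]
  ring

lemma shift_mask_neg (f g ψ : Linf) (m n : ℤ) :
    ∑' k, (if k < 0 then (ci f (m + 1 - k) - ci g (m + 1 - k)) * ci ψ (k - (n + 1)) else 0)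
      = ∑' k, (if k < -1 then (ci f (m - k) - ci g (m - k)) * ci ψ (k - n) else 0) := by
  rw [← Equiv.tsum_eq (Equiv.addRight (1 : ℤ))
    (fun k => if k < 0 then (ci f (m + 1 - k) - ci g (m + 1 - k)) * ci ψ (k - (n + 1)) else 0)]
  congr 1
  funext k
  simp only [Equiv.coe_addRight]
  rw [show m + 1 - (k + 1) = m - k by ring, show k + 1 - (n + 1) = k - n by ring]
  by_cases h : k < -1
  · rw [if_pos h]; exact if_pos (by omega)
  · rw [if_neg h]; exact if_neg (by omega)

lemma shift_mask_pos (f g ψ : Linf) (m n : ℤ) :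
    ∑' k, (if 0 ≤ k then (ci f (m - 1 - k) - ci g (m - 1 - k)) * ci ψ (k - (n - 1)) else 0)
      = ∑' k, (if 1 ≤ k then (ci f (m - k) - ci g (m - k)) * ci ψ (k - n) else 0) := by
  rw [← Equiv.tsum_eq (Equiv.subRight (1 : ℤ))
    (fun k => if 0 ≤ k then (ci f (m - 1 - k) - ci g (m - 1 - k)) * ci ψ (k - (n - 1)) else 0)]
  congr 1
  funext k
  simp only [Equiv.subRight_apply]
  rw [show m - 1 - (k - 1) = m - k by ring, show k - 1 - (n - 1) = k - n by ring]
  by_cases h : 1 ≤ k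
  · rw [if_pos h, if_pos (by omega : (0:ℤ) ≤ k - 1)]
  · rw [if_neg h, if_neg (by omega : ¬ (0:ℤ) ≤ k - 1)]

lemma summable_mask_lt_neg_one (f g ψ : Linf) (m n : ℤ) :
    Summable fun k => if k < -1 then (ci f (m - k) - ci g (m - k)) * ci ψ (k - n) else 0 := by
  have h := ((Equiv.addRight (1:ℤ)).summable_iff).mpr (summable_maskA_neg f g ψ (m+1) (n+1))
  convert h using 1
  funext k
  simp only [Function.comp, Equiv.coe_addRight]
  rw [show m + 1 - (k + 1) = m - k by ring, show k + 1 - (n + 1) = k - n by ring]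
  by_cases h : k < -1
  · rw [if_pos h]; exact (if_pos (by omega)).symm
  · rw [if_neg h]; exact (if_neg (by omega)).symm

lemma summable_mask_one_le (f g ψ : Linf) (m n : ℤ) :
    Summable fun k => if 1 ≤ k then (ci f (m - k) - ci g (m - k)) * ci ψ (k - n) else 0 := by
  have h := ((Equiv.subRight (1:ℤ)).summable_iff).mpr (summable_maskA_pos f g ψ (m-1) (n-1))
  convert h using 1
  funext k
  simp only [Function.comp, Equiv.subRight_apply]
  rw [show m - 1 - (k - 1) = m - k by ring, show k - 1 - (n - 1) = k - n by ring]
  by_cases h : 1 ≤ k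
  · rw [if_pos h, if_pos (by omega : (0:ℤ) ≤ k - 1)]
  · rw [if_neg h, if_neg (by omega : ¬ (0:ℤ) ≤ k - 1)]
/-! ### Commutation is equivalent to the bilinear coefficient relations -/

lemma commute_iff_R (f₁ g₁ f₂ g₂ : Linf) :
    Sop f₁ g₁ ∘L Sop f₂ g₂ = Sop f₂ g₂ ∘L Sop f₁ g₁ ↔
      ((∀ p j : ℤ, j < 0 → (ci f₁ p - ci g₁ p) * ci f₂ j = (ci f₂ p - ci g₂ p) * ci f₁ j) ∧
       (∀ p j : ℤ, 1 ≤ j → (ci f₁ p - ci g₁ p) * ci g₂ j = (ci f₂ p - ci g₂ p) * ci g₁ j)) := by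
  constructor
  · intro h
    have happ : ∀ n : ℤ, Sop f₁ g₁ (Sop f₂ g₂ (fourierBasis (T := 2 * Real.pi) n))
        = Sop f₂ g₂ (Sop f₁ g₁ (fourierBasis (T := 2 * Real.pi) n)) := by
      intro n
      have h2 := congrArg (fun T : L2 →L[ℂ] L2 => T (fourierBasis (T := 2 * Real.pi) n)) h
      simpa only [ContinuousLinearMap.comp_apply] using h2
    have hD1 : ∀ n m : ℤ, 0 ≤ n →
        ∑' k, (if k < 0 then (ci f₁ (m - k) - ci g₁ (m - k)) * ci f₂ (k - n) else 0)
          = ∑' k, (if k < 0 then (ci f₂ (m - k) - ci g₂ (m - k)) * ci f₁ (k - n) else 0) := by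
      intro n m hn
      apply (T_iff_D_neg f₁ g₁ f₂ g₂ m n).mp
      have h1 : co (Sop f₁ g₁ (mul f₂ (fourierBasis (T := 2 * Real.pi) n))) m
          = co (Sop f₂ g₂ (mul f₁ (fourierBasis (T := 2 * Real.pi) n))) m := by
        rw [← Sop_e_nonneg f₂ g₂ hn, ← Sop_e_nonneg f₁ g₁ hn, happ n]
      rw [co_Sop, co_Sop] at h1
      simp_rw [co_mul_e] at h1
      exact h1
    have hD2 : ∀ n m : ℤ, n < 0 →
        ∑' k, (if 0 ≤ k then (ci f₁ (m - k) - ci g₁ (m - k)) * ci g₂ (k - n) else 0)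
          = ∑' k, (if 0 ≤ k then (ci f₂ (m - k) - ci g₂ (m - k)) * ci g₁ (k - n) else 0) := by
      intro n m hn
      apply (T_iff_D_pos f₁ g₁ f₂ g₂ m n).mp
      have h1 : co (Sop f₁ g₁ (mul g₂ (fourierBasis (T := 2 * Real.pi) n))) m
          = co (Sop f₂ g₂ (mul g₁ (fourierBasis (T := 2 * Real.pi) n))) m := by
        rw [← Sop_e_neg f₂ g₂ hn, ← Sop_e_neg f₁ g₁ hn, happ n]
      rw [co_Sop, co_Sop] at h1
      simp_rw [co_mul_e] at h1
      exact h1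
    constructor
    · intro p j hj
      set n : ℤ := -1 - j with hn'
      set m : ℤ := p - 1 with hm'
      have e1 := hD1 n m (by omega)
      have e2 := hD1 (n + 1) (m + 1) (by omega)
      rw [shift_mask_neg f₁ g₁ f₂ m n, shift_mask_neg f₂ g₂ f₁ m n] at e2
      have e3 : ((∑' k, (if k < 0 then (ci f₁ (m - k) - ci g₁ (m - k)) * ci f₂ (k - n) else 0))
            - ∑' k, (if k < -1 then (ci f₁ (m - k) - ci g₁ (m - k)) * ci f₂ (k - n) else 0))
          = (∑' k, (if k < 0 then (ci f₂ (m - k) - ci g₂ (m - k)) * ci f₁ (k - n) else 0))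
            - ∑' k, (if k < -1 then (ci f₂ (m - k) - ci g₂ (m - k)) * ci f₁ (k - n) else 0) := by
        rw [e1, e2]
      rw [isolate_neg (fun k => (ci f₁ (m - k) - ci g₁ (m - k)) * ci f₂ (k - n))
          (summable_mask_lt_neg_one f₁ g₁ f₂ m n),
        isolate_neg (fun k => (ci f₂ (m - k) - ci g₂ (m - k)) * ci f₁ (k - n))
          (summable_mask_lt_neg_one f₂ g₂ f₁ m n)] at e3
      rw [show m - -1 = p by rw [hm']; ring, show (-1 : ℤ) - n = j by rw [hn']; ring] at e3
      exact e3
    · intro p j hj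
      set n : ℤ := -j with hn'
      set m : ℤ := p with hm'
      have e1 := hD2 n m (by omega)
      have e2 := hD2 (n - 1) (m - 1) (by omega)
      rw [shift_mask_pos f₁ g₁ g₂ m n, shift_mask_pos f₂ g₂ g₁ m n] at e2
      have e3 : ((∑' k, (if 0 ≤ k then (ci f₁ (m - k) - ci g₁ (m - k)) * ci g₂ (k - n) else 0))
            - ∑' k, (if 1 ≤ k then (ci f₁ (m - k) - ci g₁ (m - k)) * ci g₂ (k - n) else 0))
          = (∑' k, (if 0 ≤ k then (ci f₂ (m - k) - ci g₂ (m - k)) * ci g₁ (k - n) else 0))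
            - ∑' k, (if 1 ≤ k then (ci f₂ (m - k) - ci g₂ (m - k)) * ci g₁ (k - n) else 0) := by
        rw [e1, e2]
      rw [isolate_pos (fun k => (ci f₁ (m - k) - ci g₁ (m - k)) * ci g₂ (k - n))
          (summable_mask_one_le f₁ g₁ g₂ m n),
        isolate_pos (fun k => (ci f₂ (m - k) - ci g₂ (m - k)) * ci g₁ (k - n))
          (summable_mask_one_le f₂ g₂ g₁ m n)] at e3
      rw [show m - 0 = p by rw [hm']; ring, show (0 : ℤ) - n = j by rw [hn']; ring] at e3
      exact e3
  · rintro ⟨R1, R2⟩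
    refine ContinuousLinearMap.ext_on
      (Submodule.dense_iff_topologicalClosure_eq_top.mpr
        (fourierBasis (T := 2 * Real.pi)).dense_span) ?_
    rintro v ⟨n, rfl⟩
    simp only [ContinuousLinearMap.comp_apply]
    rcases le_or_gt 0 n with hn | hn
    · rw [Sop_e_nonneg f₂ g₂ hn, Sop_e_nonneg f₁ g₁ hn]
      apply ext_co
      intro m
      rw [co_Sop, co_Sop]
      simp_rw [co_mul_e]
      apply (T_iff_D_neg f₁ g₁ f₂ g₂ m n).mpr
      apply tsum_congr
      intro k
      by_cases hk : k < 0
      · rw [if_pos hk, if_pos hk]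
        exact R1 (m - k) (k - n) (by omega)
      · rw [if_neg hk, if_neg hk]
    · rw [Sop_e_neg f₂ g₂ hn, Sop_e_neg f₁ g₁ hn]
      apply ext_co
      intro m
      rw [co_Sop, co_Sop]
      simp_rw [co_mul_e]
      apply (T_iff_D_pos f₁ g₁ f₂ g₂ m n).mpr
      apply tsum_congr
      intro k
      by_cases hk : 0 ≤ k
      · rw [if_pos hk, if_pos hk]
        exact R2 (m - k) (k - n) (by omega)
      · rw [if_neg hk, if_neg hk]
/-! ### Pure coefficient algebra: classification -/

lemma key_algebra (F₁ G₁ F₂ G₂ : ℤ → ℂ)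
    (R1 : ∀ p j : ℤ, j < 0 → (F₁ p - G₁ p) * F₂ j = (F₂ p - G₂ p) * F₁ j)
    (R2 : ∀ p j : ℤ, 1 ≤ j → (F₁ p - G₁ p) * G₂ j = (F₂ p - G₂ p) * G₁ j) :
    ((∀ p, F₁ p = G₁ p) ∧ (∀ p, F₂ p = G₂ p)) ∨
    ((∀ j, j < 0 → F₁ j = 0) ∧ (∀ j, 1 ≤ j → G₁ j = 0) ∧
     (∀ j, j < 0 → F₂ j = 0) ∧ (∀ j, 1 ≤ j → G₂ j = 0)) ∨
    (∃ c₁ c₂ c₃ : ℂ, ‖c₁‖ + ‖c₂‖ ≠ 0 ∧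
      (∀ p, c₁ * F₁ p - c₂ * F₂ p = if p = 0 then c₃ else 0) ∧
      (∀ p, c₁ * G₁ p - c₂ * G₂ p = if p = 0 then c₃ else 0)) := by
  by_cases hA1 : ∀ p, F₁ p - G₁ p = 0
  · by_cases hA2 : ∀ p, F₂ p - G₂ p = 0
    · exact Or.inl ⟨fun p => sub_eq_zero.mp (hA1 p), fun p => sub_eq_zero.mp (hA2 p)⟩
    · push_neg at hA2
      obtain ⟨p₀, hp₀⟩ := hA2
      have hF1 : ∀ j, j < 0 → F₁ j = 0 := by
        intro j hj
        have h := R1 p₀ j hj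
        rw [hA1 p₀, zero_mul] at h
        exact (mul_eq_zero.mp h.symm).resolve_left hp₀
      have hG1 : ∀ j, 1 ≤ j → G₁ j = 0 := by
        intro j hj
        have h := R2 p₀ j hj
        rw [hA1 p₀, zero_mul] at h
        exact (mul_eq_zero.mp h.symm).resolve_left hp₀
      refine Or.inr (Or.inr ⟨1, 0, F₁ 0, by simp, ?_, ?_⟩)
      · intro p
        rcases lt_trichotomy p 0 with h | h | h
        · rw [if_neg (by omega : p ≠ 0), hF1 p h]
          ring
        · subst h
          simp
        · rw [if_neg (by omega : p ≠ 0)]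
          have h2 := hG1 p (by omega)
          have h3 := sub_eq_zero.mp (hA1 p)
          rw [h3, h2]
          ring
      · intro p
        have h3 := sub_eq_zero.mp (hA1 p)
        rcases lt_trichotomy p 0 with h | h | h
        · rw [if_neg (by omega : p ≠ 0), ← h3, hF1 p h]
          ring
        · subst h
          rw [if_pos rfl, ← h3]
          ring
        · rw [if_neg (by omega : p ≠ 0), hG1 p (by omega)]
          ring
  · push_neg at hA1
    obtain ⟨p₀, hp₀⟩ := hA1
    set lam : ℂ := (F₂ p₀ - G₂ p₀) / (F₁ p₀ - G₁ p₀) with hlam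
    have hlam' : lam * (F₁ p₀ - G₁ p₀) = F₂ p₀ - G₂ p₀ := by
      rw [hlam]
      field_simp
    have hF2 : ∀ j, j < 0 → F₂ j = lam * F₁ j := by
      intro j hj
      have h := R1 p₀ j hj
      have h2 : (F₁ p₀ - G₁ p₀) * (F₂ j - lam * F₁ j) = 0 := by
        linear_combination h - F₁ j * hlam'
      have := (mul_eq_zero.mp h2).resolve_left hp₀
      linear_combination this
    have hG2 : ∀ j, 1 ≤ j → G₂ j = lam * G₁ j := by
      intro j hj
      have h := R2 p₀ j hj
      have h2 : (F₁ p₀ - G₁ p₀) * (G₂ j - lam * G₁ j) = 0 := by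
        linear_combination h - G₁ j * hlam'
      have := (mul_eq_zero.mp h2).resolve_left hp₀
      linear_combination this
    by_cases hB : ∀ p, F₂ p - G₂ p = lam * (F₁ p - G₁ p)
    · refine Or.inr (Or.inr ⟨lam, 1, lam * F₁ 0 - F₂ 0, by rw [norm_one]; positivity, ?_, ?_⟩)
      · intro p
        rcases lt_trichotomy p 0 with h | h | h
        · rw [if_neg (by omega : p ≠ 0), hF2 p h]
          ring
        · subst h
          rw [if_pos rfl]
          ring
        · rw [if_neg (by omega : p ≠ 0)]
          linear_combination (-1 : ℂ) * hB p - hG2 p (by omega)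
      · intro p
        rcases lt_trichotomy p 0 with h | h | h
        · rw [if_neg (by omega : p ≠ 0)]
          linear_combination hB p - hF2 p h
        · subst h
          rw [if_pos rfl]
          linear_combination hB 0
        · rw [if_neg (by omega : p ≠ 0)]
          linear_combination (-1 : ℂ) * hG2 p (by omega)
    · push_neg at hB
      obtain ⟨p₁, hp₁⟩ := hB
      have hkey : lam * (F₁ p₁ - G₁ p₁) - (F₂ p₁ - G₂ p₁) ≠ 0 := by
        intro hc
        apply hp₁
        linear_combination -hc
      have hF1 : ∀ j, j < 0 → F₁ j = 0 := by
        intro j hj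
        have h1 := R1 p₁ j hj
        rw [hF2 j hj] at h1
        have h2 : (lam * (F₁ p₁ - G₁ p₁) - (F₂ p₁ - G₂ p₁)) * F₁ j = 0 := by
          linear_combination h1
        exact (mul_eq_zero.mp h2).resolve_left hkey
      have hG1 : ∀ j, 1 ≤ j → G₁ j = 0 := by
        intro j hj
        have h1 := R2 p₁ j hj
        rw [hG2 j hj] at h1
        have h2 : (lam * (F₁ p₁ - G₁ p₁) - (F₂ p₁ - G₂ p₁)) * G₁ j = 0 := by
          linear_combination h1
        exact (mul_eq_zero.mp h2).resolve_left hkey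
      refine Or.inr (Or.inl ⟨hF1, hG1, fun j hj => ?_, fun j hj => ?_⟩)
      · rw [hF2 j hj, hF1 j hj, mul_zero]
      · rw [hG2 j hj, hG1 j hj, mul_zero]

lemma key_algebra_rev (F₁ G₁ F₂ G₂ : ℤ → ℂ)
    (h : ((∀ p, F₁ p = G₁ p) ∧ (∀ p, F₂ p = G₂ p)) ∨
      ((∀ j, j < 0 → F₁ j = 0) ∧ (∀ j, 1 ≤ j → G₁ j = 0) ∧
       (∀ j, j < 0 → F₂ j = 0) ∧ (∀ j, 1 ≤ j → G₂ j = 0)) ∨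
      (∃ c₁ c₂ c₃ : ℂ, ‖c₁‖ + ‖c₂‖ ≠ 0 ∧
        (∀ p, c₁ * F₁ p - c₂ * F₂ p = if p = 0 then c₃ else 0) ∧
        (∀ p, c₁ * G₁ p - c₂ * G₂ p = if p = 0 then c₃ else 0))) :
    (∀ p j : ℤ, j < 0 → (F₁ p - G₁ p) * F₂ j = (F₂ p - G₂ p) * F₁ j) ∧
    (∀ p j : ℤ, 1 ≤ j → (F₁ p - G₁ p) * G₂ j = (F₂ p - G₂ p) * G₁ j) := by
  rcases h with ⟨h1, h2⟩ | ⟨h1, h2, h3, h4⟩ | ⟨c₁, c₂, c₃, hne, h1, h2⟩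
  · constructor
    · intro p j _
      rw [h1 p, h2 p, sub_self, sub_self, zero_mul, zero_mul]
    · intro p j _
      rw [h1 p, h2 p, sub_self, sub_self, zero_mul, zero_mul]
  · constructor
    · intro p j hj
      rw [h1 j hj, h3 j hj, mul_zero, mul_zero]
    · intro p j hj
      rw [h2 j hj, h4 j hj, mul_zero, mul_zero]
  · have hA : ∀ p, c₁ * (F₁ p - G₁ p) = c₂ * (F₂ p - G₂ p) := by
      intro p
      linear_combination h1 p - h2 p
    by_cases hc₁ : c₁ = 0
    · have hc₂ : c₂ ≠ 0 := by
        intro hc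
        apply hne
        rw [hc₁, hc]; simp
      have hA2 : ∀ p, F₂ p - G₂ p = 0 := by
        intro p
        have := hA p
        rw [hc₁, zero_mul] at this
        exact (mul_eq_zero.mp this.symm).resolve_left hc₂
      have hF2 : ∀ j : ℤ, j ≠ 0 → F₂ j = 0 := by
        intro j hj
        have := h1 j
        rw [if_neg hj, hc₁, zero_mul, zero_sub, neg_eq_zero] at this
        exact (mul_eq_zero.mp this).resolve_left hc₂
      have hG2 : ∀ j : ℤ, j ≠ 0 → G₂ j = 0 := by
        intro j hj
        have := h2 j
        rw [if_neg hj, hc₁, zero_mul, zero_sub, neg_eq_zero] at this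
        exact (mul_eq_zero.mp this).resolve_left hc₂
      constructor
      · intro p j hj
        rw [hA2 p, hF2 j (by omega), zero_mul, mul_zero]
      · intro p j hj
        rw [hA2 p, hG2 j (by omega), zero_mul, mul_zero]
    · constructor
      · intro p j hj
        have hj0 : c₁ * F₁ j - c₂ * F₂ j = 0 := by
          have := h1 j
          rwa [if_neg (by omega : j ≠ 0)] at this
        have e : c₁ * ((F₁ p - G₁ p) * F₂ j - (F₂ p - G₂ p) * F₁ j) = 0 := by
          linear_combination F₂ j * hA p - (F₂ p - G₂ p) * hj0
        have := (mul_eq_zero.mp e).resolve_left hc₁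
        linear_combination this
      · intro p j hj
        have hj0 : c₁ * G₁ j - c₂ * G₂ j = 0 := by
          have := h2 j
          rwa [if_neg (by omega : j ≠ 0)] at this
        have e : c₁ * ((F₁ p - G₁ p) * G₂ j - (F₂ p - G₂ p) * G₁ j) = 0 := by
          linear_combination G₂ j * hA p - (F₂ p - G₂ p) * hj0
        have := (mul_eq_zero.mp e).resolve_left hc₁
        linear_combination this
/-! ### Translating the abstract conditions -/

lemma eq_iff_ci (φ ψ : Linf) : φ = ψ ↔ ∀ n, ci φ n = ci ψ n :=
  ⟨fun h n => by rw [h], linf_ext⟩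

lemma memHinf_iff (φ : Linf) : MemHinf φ ↔ ∀ n : ℤ, n < 0 → ci φ n = 0 := Iff.rfl

lemma ci_conjInf (φ : Linf) (n : ℤ) : ci (conjInf φ) n = conj (ci φ (-n)) := by
  rw [ci, fourierCoeff_congr (conjInf_coeFn φ), ci, fourierCoeff, fourierCoeff, ← integral_conj]
  apply integral_congr_ae
  refine Filter.Eventually.of_forall fun t => ?_
  simp only [smul_eq_mul, map_mul]
  rw [← fourier_neg, neg_neg]

lemma memHinf_conjInf_iff (φ : Linf) :
    MemHinf (conjInf φ) ↔ ∀ k : ℤ, 1 ≤ k → ci φ k = 0 := by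
  rw [memHinf_iff]
  constructor
  · intro h k hk
    have := h (-k) (by omega)
    rw [ci_conjInf, neg_neg] at this
    exact star_eq_zero.mp this
  · intro h n hn
    rw [ci_conjInf]
    rw [h (-n) (by omega)]
    exact star_zero _

lemma const_iff (c₁ c₂ c₃ : ℂ) (φ ψ : Linf) :
    c₁ • φ - c₂ • ψ = constInf c₃ ↔
      ∀ p : ℤ, c₁ * ci φ p - c₂ * ci ψ p = if p = 0 then c₃ else 0 := by
  rw [eq_iff_ci]
  constructor
  · intro h p
    have := h p
    rwa [ci_sub_smul, ci_const] at this
  · intro h p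
    rw [ci_sub_smul, ci_const]
    exact h p

/-- `S_{f₁,g₁}` and `S_{f₂,g₂}` commute iff one of the three listed
conditions holds. -/
theorem statement16 (f₁ f₂ g₁ g₂ : Linf) :
    Sop f₁ g₁ ∘L Sop f₂ g₂ = Sop f₂ g₂ ∘L Sop f₁ g₁ ↔
      (f₁ = g₁ ∧ f₂ = g₂) ∨
        (MemHinf f₁ ∧ MemHinf (conjInf g₁) ∧ MemHinf f₂ ∧ MemHinf (conjInf g₂)) ∨
        (∃ c₁ c₂ c₃ : ℂ, ‖c₁‖ + ‖c₂‖ ≠ 0 ∧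
          c₁ • f₁ - c₂ • f₂ = constInf c₃ ∧ c₁ • g₁ - c₂ • g₂ = constInf c₃) := by
  rw [commute_iff_R]
  constructor
  · rintro ⟨R1, R2⟩
    rcases key_algebra (ci f₁) (ci g₁) (ci f₂) (ci g₂) R1 R2 with
      ⟨h1, h2⟩ | ⟨h1, h2, h3, h4⟩ | ⟨c₁, c₂, c₃, hne, h1, h2⟩
    · exact Or.inl ⟨linf_ext h1, linf_ext h2⟩
    · refine Or.inr (Or.inl ⟨?_, ?_, ?_, ?_⟩)
      · exact (memHinf_iff f₁).mpr h1
      · exact (memHinf_conjInf_iff g₁).mpr h2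
      · exact (memHinf_iff f₂).mpr h3
      · exact (memHinf_conjInf_iff g₂).mpr h4
    · exact Or.inr (Or.inr ⟨c₁, c₂, c₃, hne,
        (const_iff c₁ c₂ c₃ f₁ f₂).mpr h1, (const_iff c₁ c₂ c₃ g₁ g₂).mpr h2⟩)
  · intro h
    apply key_algebra_rev (ci f₁) (ci g₁) (ci f₂) (ci g₂)
    rcases h with ⟨h1, h2⟩ | ⟨h1, h2, h3, h4⟩ | ⟨c₁, c₂, c₃, hne, h1, h2⟩
    · exact Or.inl ⟨fun p => by rw [h1], fun p => by rw [h2]⟩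
    · exact Or.inr (Or.inl ⟨(memHinf_iff f₁).mp h1, (memHinf_conjInf_iff g₁).mp h2,
        (memHinf_iff f₂).mp h3, (memHinf_conjInf_iff g₂).mp h4⟩)
    · exact Or.inr (Or.inr ⟨c₁, c₂, c₃, hne,
        (const_iff c₁ c₂ c₃ f₁ f₂).mp h1, (const_iff c₁ c₂ c₃ g₁ g₂).mp h2⟩)

end GSIO
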